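/- In the SA-PAUSE graph on m-subsets of K (vertices are m-subsets; U is an active neighbor of V iff they differ in one user and the user in V \ U is the ucb-minimizer of V; edges are symmetric), the graph is connected: for any two vertices V, U there is a path of neighboring vertices from V to U. -/

import Mathlib

/-- Existence of a "top-n" subset: `n` elements whose ucb values dominate all others. -/
lemma stmt_16_topset {ι : Type*} [DecidableEq ι] (ucb : ι → ℝ) :
    ∀ (n : ℕ) (s : Finset ι), n ≤ s.card →
      ∃ t ⊆ s, t.card = n ∧ ∀ x ∈ t, ∀ y ∈ s, y ∉ t → ucb y ≤ ucb x := by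
  intro n
  induction n with
  | zero => exact fun s _ => ⟨∅, Finset.empty_subset s, rfl, by simp⟩
  | succ n ih =>
    intro s hs
    have hne : s.Nonempty := Finset.card_pos.mp (by omega)
    obtain ⟨a, ha, hmax⟩ := Finset.exists_max_image s ucb hne
    obtain ⟨t, hts, htc, htp⟩ := ih (s.erase a) (by rw [Finset.card_erase_of_mem ha]; omega)
    have hat : a ∉ t := fun h => (Finset.mem_erase.mp (hts h)).1 rfl
    refine ⟨insert a t, ?_, ?_, ?_⟩
    · intro x hx
      rcases Finset.mem_insert.mp hx with rfl | hx
      · exact ha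
      · exact Finset.mem_of_mem_erase (hts hx)
    · rw [Finset.card_insert_of_notMem hat, htc]
    · intro x hx y hy hyt
      rcases Finset.mem_insert.mp hx with rfl | hx
      · exact hmax y hy
      · refine htp x hx y (Finset.mem_erase.mpr ⟨?_, hy⟩) ?_
        · rintro rfl; exact hyt (Finset.mem_insert_self y t)
        · exact fun h => hyt (Finset.mem_insert_of_mem h)

/-- The SA-PAUSE neighbor graph on `m`-subsets (where `V` and `U` are adjacent iff they
differ in exactly one user and the distinct user of one of them minimizes `ucb` on its
set) is connected: any two `m`-subsets are joined by a path of neighboring vertices. -/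
theorem stmt_16 {ι : Type*} [Fintype ι] [DecidableEq ι] (ucb : ι → ℝ)
    (hinj : Function.Injective ucb) (m : ℕ) (hm : 1 ≤ m) (hmK : m < Fintype.card ι) :
    ∀ V U : Finset ι, V.card = m → U.card = m →
      Relation.ReflTransGen
        (fun V U : Finset ι =>
          V.card = m ∧ U.card = m ∧ (V ∩ U).card = m - 1 ∧
          ((∃ k ∈ V, k ∉ U ∧ ∀ k' ∈ V, ucb k ≤ ucb k') ∨
           (∃ k ∈ U, k ∉ V ∧ ∀ k' ∈ U, ucb k ≤ ucb k')))
        V U := by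
  classical
  set R : Finset ι → Finset ι → Prop := fun V U =>
    V.card = m ∧ U.card = m ∧ (V ∩ U).card = m - 1 ∧
    ((∃ k ∈ V, k ∉ U ∧ ∀ k' ∈ V, ucb k ≤ ucb k') ∨
     (∃ k ∈ U, k ∉ V ∧ ∀ k' ∈ U, ucb k ≤ ucb k')) with hR
  have hsymm : Symmetric R := by
    rintro a b ⟨h1, h2, h3, h4⟩
    exact ⟨h2, h1, by rwa [Finset.inter_comm], h4.symm⟩
  -- the top-m set
  obtain ⟨W, -, hWc, hWtop⟩ :=
    stmt_16_topset ucb m (Finset.univ : Finset ι) (by simp; omega)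
  have hW : ∀ x ∈ W, ∀ y, y ∉ W → ucb y ≤ ucb x := fun x hx y hy =>
    hWtop x hx y (Finset.mem_univ y) hy
  -- every m-set reaches W
  have reach : ∀ V : Finset ι, V.card = m → Relation.ReflTransGen R V W := by
    suffices H : ∀ c (V : Finset ι), (W \ V).card = c → V.card = m →
        Relation.ReflTransGen R V W from fun V hV => H _ V rfl hV
    intro c
    induction c using Nat.strong_induction_on with
    | _ c ih =>
      intro V hc hV
      by_cases hVW : V = W
      · exact hVW ▸ Relation.ReflTransGen.refl
      have hne : (W \ V).Nonempty := by
        rw [Finset.sdiff_nonempty]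
        intro hsub
        exact hVW (Finset.eq_of_subset_of_card_le
          ((Finset.eq_of_subset_of_card_le hsub (by omega)) ▸ Finset.Subset.refl V)
          (by omega)).symm
      obtain ⟨w, hw⟩ := hne
      have hwW : w ∈ W := (Finset.mem_sdiff.mp hw).1
      have hwV : w ∉ V := (Finset.mem_sdiff.mp hw).2
      have hVne : V.Nonempty := Finset.card_pos.mp (by omega)
      obtain ⟨v, hvV, hvmin⟩ := Finset.exists_min_image V ucb hVne
      have hvW : v ∉ W := by
        intro hvW
        apply hVW
        apply Finset.eq_of_subset_of_card_le _ (by omega)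
        intro x hx
        by_contra hxW
        have h1 : ucb x ≤ ucb v := hW v hvW x hxW
        have h2 : ucb v ≤ ucb x := hvmin x hx
        have : x = v := hinj (le_antisymm h1 h2)
        exact hxW (this ▸ hvW)
      set V' := insert w (V.erase v) with hV'def
      have hwVe : w ∉ V.erase v := fun h => hwV (Finset.mem_of_mem_erase h)
      have hV'c : V'.card = m := by
        rw [hV'def, Finset.card_insert_of_notMem hwVe, Finset.card_erase_of_mem hvV, hV]
        omega
      have hvV' : v ∉ V' := by
        intro h
        rcases Finset.mem_insert.mp h with rfl | h
        · exact hwV hvV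
        · exact (Finset.mem_erase.mp h).1 rfl
      have hinter : V ∩ V' = V.erase v := by
        ext x
        simp only [hV'def, Finset.mem_inter, Finset.mem_insert, Finset.mem_erase]
        constructor
        · rintro ⟨hxV, hx | ⟨hxv, -⟩⟩
          · exact absurd hxV (hx ▸ hwV)
          · exact ⟨hxv, hxV⟩
        · rintro ⟨h1, h2⟩
          exact ⟨h2, Or.inr ⟨h1, h2⟩⟩
      have edge : R V V' := by
        refine ⟨hV, hV'c, ?_, Or.inl ⟨v, hvV, hvV', hvmin⟩⟩
        rw [hinter, Finset.card_erase_of_mem hvV, hV]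
      have hmeas : W \ V' = (W \ V).erase w := by
        ext x
        simp only [hV'def, Finset.mem_sdiff, Finset.mem_erase, Finset.mem_insert]
        constructor
        · rintro ⟨hxW, hx⟩
          push_neg at hx
          exact ⟨hx.1, hxW, hx.2 fun hxv => hvW (hxv ▸ hxW)⟩
        · rintro ⟨hxw, hxW, hxV⟩
          refine ⟨hxW, ?_⟩
          rintro (rfl | h)
          · exact hxw rfl
          · exact hxV h.2
      have hlt : (W \ V').card < c := by
        rw [hmeas, Finset.card_erase_of_mem hw, hc]
        have : 0 < c := hc ▸ Finset.card_pos.mpr ⟨w, hw⟩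
        omega
      exact Relation.ReflTransGen.head edge (ih _ hlt V' rfl hV'c)
  intro V U hV hU
  exact (reach V hV).trans ((@Relation.ReflTransGen.stdSymm _ R ⟨fun _ _ h => hsymm h⟩).symm _ _ (reach U hU))
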